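/- Fix $s \ge 1$, $\lambda > 0$, and positive reals $\theta$ and $(c_u)_{\emptyset \ne u \subseteq \{1:s\}}$ with $c_u > 0$. Consider $F(\gamma) = \left(\sum_{\emptyset\ne u} \gamma_u^{\lambda}\, \theta^{|u|}\right)^{1/(2\lambda)} \left(\sum_{\emptyset \ne u} c_u^2/\gamma_u\right)^{1/2}$ over all choices of positive weights $\gamma = (\gamma_u)_{u}$. Then $F$ is minimized by taking $\gamma_u = \left(c_u\, \theta^{-|u|/2}\right)^{2/(1+\lambda)}$ (up to a common positive scaling factor, which leaves $F$ invariant). -/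

import Mathlib

open Finset

section Aux

private lemma exp_rpow' (x y : ℝ) : Real.exp x ^ y = Real.exp (x * y) :=
  (Real.exp_mul x y).symm

private lemma exp_npow (x : ℝ) (n : ℕ) : Real.exp x ^ n = Real.exp (n * x) :=
  (Real.exp_nat_mul x n).symm

/-- γ* term identity for A -/
private lemma aux_A {c θ lam : ℝ} (hc : 0 < c) (hθ : 0 < θ) (hlam : 0 < lam) (k : ℕ) :
    ((c * θ ^ (-(k : ℝ) / 2)) ^ (2 / (1 + lam))) ^ lam * θ ^ k
      = (c ^ 2) ^ (lam / (1 + lam)) * θ ^ ((k : ℝ) / (1 + lam)) := by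
  have h1 : (0:ℝ) < 1 + lam := by linarith
  rw [show c = Real.exp (Real.log c) from (Real.exp_log hc).symm,
      show θ = Real.exp (Real.log θ) from (Real.exp_log hθ).symm]
  simp only [exp_rpow', exp_npow, ← Real.exp_add, ← Real.exp_sub, Real.exp_eq_exp]
  field_simp
  try ring

/-- γ* term identity for B -/
private lemma aux_B {c θ lam : ℝ} (hc : 0 < c) (hθ : 0 < θ) (hlam : 0 < lam) (k : ℕ) :
    c ^ 2 / (c * θ ^ (-(k : ℝ) / 2)) ^ (2 / (1 + lam))
      = (c ^ 2) ^ (lam / (1 + lam)) * θ ^ ((k : ℝ) / (1 + lam)) := by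
  have h1 : (0:ℝ) < 1 + lam := by linarith
  rw [show c = Real.exp (Real.log c) from (Real.exp_log hc).symm,
      show θ = Real.exp (Real.log θ) from (Real.exp_log hθ).symm]
  simp only [exp_rpow', exp_npow, div_eq_mul_inv, ← Real.exp_neg, ← Real.exp_add,
    Real.exp_eq_exp]
  field_simp
  try ring

/-- Hölder pointwise product identity -/
private lemma aux_fg {c θ lam g : ℝ} (hc : 0 < c) (hθ : 0 < θ) (hlam : 0 < lam)
    (hg : 0 < g) (k : ℕ) :
    (g ^ lam * θ ^ k) ^ (1 / (1 + lam)) * (c ^ 2 / g) ^ (lam / (1 + lam))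
      = (c ^ 2) ^ (lam / (1 + lam)) * θ ^ ((k : ℝ) / (1 + lam)) := by
  have h1 : (0:ℝ) < 1 + lam := by linarith
  rw [show c = Real.exp (Real.log c) from (Real.exp_log hc).symm,
      show θ = Real.exp (Real.log θ) from (Real.exp_log hθ).symm,
      show g = Real.exp (Real.log g) from (Real.exp_log hg).symm]
  simp only [exp_rpow', exp_npow, div_eq_mul_inv, ← Real.exp_neg, ← Real.exp_add,
    Real.exp_eq_exp]
  field_simp
  try ring

private lemma aux_fp {θ lam g : ℝ} (hθ : 0 < θ) (hlam : 0 < lam) (hg : 0 < g) (k : ℕ) :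
    |(g ^ lam * θ ^ k) ^ (1 / (1 + lam))| ^ (1 + lam) = g ^ lam * θ ^ k := by
  have h1 : (0:ℝ) < 1 + lam := by linarith
  rw [abs_of_nonneg (Real.rpow_nonneg (by positivity) _), ← Real.rpow_natCast θ k,
    ← Real.rpow_mul (by positivity), one_div, inv_mul_cancel₀ h1.ne', Real.rpow_one]

private lemma aux_gq {c lam g : ℝ} (hc : 0 < c) (hlam : 0 < lam) (hg : 0 < g) :
    |(c ^ 2 / g) ^ (lam / (1 + lam))| ^ ((1 + lam) / lam) = c ^ 2 / g := by
  have h1 : (0:ℝ) < 1 + lam := by linarith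
  rw [abs_of_nonneg (Real.rpow_nonneg (by positivity) _),
    ← Real.rpow_mul (by positivity)]
  rw [show lam / (1 + lam) * ((1 + lam) / lam) = 1 by field_simp, Real.rpow_one]

end Aux

/-- Weight optimization for randomly shifted lattice rules: the POD-type weights
`γ_u = (c_u θ^{-|u|/2})^{2/(1+λ)}` minimize
`F(γ) = (∑_u γ_u^λ θ^{|u|})^{1/(2λ)} (∑_u c_u^2/γ_u)^{1/2}` over positive weights,
and `F` is invariant under positive scaling of the weights. -/
theorem stmt_4 (s : ℕ) (hs : 1 ≤ s) (lam θ : ℝ) (hlam : 0 < lam) (hθ : 0 < θ)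
    (c : Finset (Fin s) → ℝ) (hc : ∀ u : Finset (Fin s), u.Nonempty → 0 < c u) :
    let F : (Finset (Fin s) → ℝ) → ℝ := fun γ =>
      (∑ u ∈ Finset.univ.filter (fun u : Finset (Fin s) => u.Nonempty),
          (γ u) ^ lam * θ ^ (u.card : ℕ)) ^ (1 / (2 * lam)) *
        (∑ u ∈ Finset.univ.filter (fun u : Finset (Fin s) => u.Nonempty),
          (c u) ^ 2 / γ u) ^ ((1 : ℝ) / 2)
    let γstar : Finset (Fin s) → ℝ := fun u =>
      (c u * θ ^ (-(u.card : ℝ) / 2)) ^ (2 / (1 + lam))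
    (∀ γ : Finset (Fin s) → ℝ, (∀ u : Finset (Fin s), u.Nonempty → 0 < γ u) →
        F γstar ≤ F γ) ∧
      ∀ γ : Finset (Fin s) → ℝ, (∀ u : Finset (Fin s), u.Nonempty → 0 < γ u) →
        ∀ t : ℝ, 0 < t → F (fun u => t * γ u) = F γ := by
  intro F γstar
  have h1lam : (0:ℝ) < 1 + lam := by linarith
  set U : Finset (Finset (Fin s)) :=
    Finset.univ.filter (fun u : Finset (Fin s) => u.Nonempty) with hUdef
  have hmemU : ∀ u : Finset (Fin s), u ∈ U ↔ u.Nonempty := by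
    intro u; simp [hUdef]
  have hUne : U.Nonempty := by
    refine ⟨{⟨0, hs⟩}, ?_⟩
    rw [hmemU]; exact singleton_nonempty _
  -- the common value d u
  set d : Finset (Fin s) → ℝ := fun u =>
    ((c u) ^ 2) ^ (lam / (1 + lam)) * θ ^ ((u.card : ℝ) / (1 + lam)) with hddef
  have hd_pos : ∀ u ∈ U, 0 < d u := by
    intro u hu
    have hcu := hc u ((hmemU u).1 hu)
    have : (0:ℝ) < (c u) ^ 2 := by positivity
    exact mul_pos (Real.rpow_pos_of_pos this _) (Real.rpow_pos_of_pos hθ _)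
  set S : ℝ := ∑ u ∈ U, d u with hSdef
  have hS_pos : 0 < S := Finset.sum_pos hd_pos hUne
  -- F at γstar
  have hAstar : ∑ u ∈ U, (γstar u) ^ lam * θ ^ (u.card : ℕ) = S := by
    refine Finset.sum_congr rfl fun u hu => ?_
    exact aux_A (hc u ((hmemU u).1 hu)) hθ hlam u.card
  have hBstar : ∑ u ∈ U, (c u) ^ 2 / γstar u = S := by
    refine Finset.sum_congr rfl fun u hu => ?_
    exact aux_B (hc u ((hmemU u).1 hu)) hθ hlam u.card
  have hFstar : F γstar = S ^ ((1 + lam) / (2 * lam)) := by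
    show (∑ u ∈ U, (γstar u) ^ lam * θ ^ (u.card : ℕ)) ^ (1 / (2 * lam)) *
        (∑ u ∈ U, (c u) ^ 2 / γstar u) ^ ((1:ℝ)/2) = _
    rw [hAstar, hBstar, ← Real.rpow_add hS_pos]
    congr 1
    field_simp
    try ring
  constructor
  · -- minimality
    intro γ hγ
    set A : ℝ := ∑ u ∈ U, (γ u) ^ lam * θ ^ (u.card : ℕ) with hAdef
    set B : ℝ := ∑ u ∈ U, (c u) ^ 2 / γ u with hBdef
    have hA_pos : 0 < A := by
      refine Finset.sum_pos (fun u hu => ?_) hUne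
      have := hγ u ((hmemU u).1 hu)
      positivity
    have hB_pos : 0 < B := by
      refine Finset.sum_pos (fun u hu => ?_) hUne
      have h1 := hγ u ((hmemU u).1 hu)
      have h2 := hc u ((hmemU u).1 hu)
      positivity
    -- Hölder
    have hpq : Real.HolderConjugate (1 + lam) ((1 + lam) / lam) := by
      rw [Real.holderConjugate_iff_eq_conjExponent (by linarith)]
      congr 1; ring
    have key : S ≤ A ^ (1 / (1 + lam)) * B ^ (lam / (1 + lam)) := by
      have H := Real.inner_le_Lp_mul_Lq (s := U)
        (fun u => ((γ u) ^ lam * θ ^ (u.card : ℕ)) ^ (1 / (1 + lam)))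
        (fun u => ((c u) ^ 2 / γ u) ^ (lam / (1 + lam))) hpq
      have e1 : ∑ u ∈ U, ((γ u) ^ lam * θ ^ (u.card : ℕ)) ^ (1 / (1 + lam)) *
          ((c u) ^ 2 / γ u) ^ (lam / (1 + lam)) = S := by
        refine Finset.sum_congr rfl fun u hu => ?_
        exact aux_fg (hc u ((hmemU u).1 hu)) hθ hlam (hγ u ((hmemU u).1 hu)) u.card
      have e2 : ∑ u ∈ U, |((γ u) ^ lam * θ ^ (u.card : ℕ)) ^ (1 / (1 + lam))| ^ (1 + lam)
          = A := by
        refine Finset.sum_congr rfl fun u hu => ?_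
        exact aux_fp hθ hlam (hγ u ((hmemU u).1 hu)) u.card
      have e3 : ∑ u ∈ U, |((c u) ^ 2 / γ u) ^ (lam / (1 + lam))| ^ ((1 + lam) / lam)
          = B := by
        refine Finset.sum_congr rfl fun u hu => ?_
        exact aux_gq (hc u ((hmemU u).1 hu)) hlam (hγ u ((hmemU u).1 hu))
      rw [e1, e2, e3] at H
      have eq : (1:ℝ) / ((1 + lam) / lam) = lam / (1 + lam) := by
        field_simp
      rwa [eq] at H
    -- conclude
    have hexp_pos : (0:ℝ) < (1 + lam) / (2 * lam) := by positivity
    have step : S ^ ((1 + lam) / (2 * lam)) ≤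
        (A ^ (1 / (1 + lam)) * B ^ (lam / (1 + lam))) ^ ((1 + lam) / (2 * lam)) :=
      Real.rpow_le_rpow hS_pos.le key hexp_pos.le
    have final : (A ^ (1 / (1 + lam)) * B ^ (lam / (1 + lam))) ^ ((1 + lam) / (2 * lam))
        = A ^ (1 / (2 * lam)) * B ^ ((1:ℝ)/2) := by
      rw [Real.mul_rpow (Real.rpow_nonneg hA_pos.le _) (Real.rpow_nonneg hB_pos.le _),
        ← Real.rpow_mul hA_pos.le, ← Real.rpow_mul hB_pos.le]
      congr 2 <;> (field_simp; try ring)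
    rw [hFstar]
    calc S ^ ((1 + lam) / (2 * lam)) ≤ _ := step
      _ = A ^ (1 / (2 * lam)) * B ^ ((1:ℝ)/2) := final
      _ = F γ := rfl
  · -- scaling invariance
    intro γ hγ t ht
    show (∑ u ∈ U, (t * γ u) ^ lam * θ ^ (u.card : ℕ)) ^ (1 / (2 * lam)) *
        (∑ u ∈ U, (c u) ^ 2 / (t * γ u)) ^ ((1:ℝ)/2) =
      (∑ u ∈ U, (γ u) ^ lam * θ ^ (u.card : ℕ)) ^ (1 / (2 * lam)) *
        (∑ u ∈ U, (c u) ^ 2 / γ u) ^ ((1:ℝ)/2)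
    set A : ℝ := ∑ u ∈ U, (γ u) ^ lam * θ ^ (u.card : ℕ) with hAdef
    set B : ℝ := ∑ u ∈ U, (c u) ^ 2 / γ u with hBdef
    have hA_nonneg : 0 ≤ A := by
      refine Finset.sum_nonneg fun u hu => ?_
      have := hγ u ((hmemU u).1 hu)
      positivity
    have hB_nonneg : 0 ≤ B := by
      refine Finset.sum_nonneg fun u hu => ?_
      have h1 := hγ u ((hmemU u).1 hu)
      positivity
    have eA : ∑ u ∈ U, (t * γ u) ^ lam * θ ^ (u.card : ℕ) = t ^ lam * A := by
      rw [hAdef, Finset.mul_sum]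
      refine Finset.sum_congr rfl fun u hu => ?_
      rw [Real.mul_rpow ht.le (hγ u ((hmemU u).1 hu)).le]
      ring
    have eB : ∑ u ∈ U, (c u) ^ 2 / (t * γ u) = t ^ (-1:ℝ) * B := by
      rw [hBdef, Finset.mul_sum]
      refine Finset.sum_congr rfl fun u hu => ?_
      have := hγ u ((hmemU u).1 hu)
      rw [Real.rpow_neg_one]
      field_simp
      try ring
    rw [eA, eB,
      Real.mul_rpow (Real.rpow_nonneg ht.le _) hA_nonneg,
      Real.mul_rpow (Real.rpow_nonneg ht.le _) hB_nonneg,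
      ← Real.rpow_mul ht.le, ← Real.rpow_mul ht.le]
    have : t ^ (lam * (1 / (2 * lam))) * A ^ (1 / (2 * lam)) *
        (t ^ (-1 * ((1:ℝ)/2)) * B ^ ((1:ℝ)/2)) =
        (t ^ (lam * (1 / (2 * lam))) * t ^ (-1 * ((1:ℝ)/2))) *
        (A ^ (1 / (2 * lam)) * B ^ ((1:ℝ)/2)) := by ring
    rw [this, ← Real.rpow_add ht]
    rw [show lam * (1 / (2 * lam)) + -1 * ((1:ℝ)/2) = 0 by field_simp; ring, Real.rpow_zero, one_mul]
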